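/- For even k with n/2+1 ≤ k ≤ n-1, letting p_x ∈ ℝⁿ be defined by p_x(i) = (-1)^{x_i}/√n for even-weight x ∈ ℤ₂ⁿ, and V_x = span{p_y : y = x or d(x,y) = k}: for every even-weight x one has V_x = ℝⁿ. Consequently, if R is a symmetric n×n matrix with p_xᵀ R p_y = 0 for all pairs with x = y or d(x,y) = k, then R = 0. -/

import Mathlib

private lemma signflip (a : ZMod 2) : ((-1:ℝ))^((a+1).val) = -(-1:ℝ)^(a.val) := by
  fin_cases a
  · show ((-1:ℝ))^1 = -(-1)^0
    norm_num
  · show ((-1:ℝ))^0 = -(-1)^1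
    norm_num

private lemma parity (n : ℕ) (x y : Fin n → ZMod 2) :
    ((hammingDist x y : ZMod 2)) = ∑ i, (x i + y i) := by
  rw [hammingDist, Finset.card_filter]
  push_cast
  refine Finset.sum_congr rfl fun i _ => ?_
  rcases (by decide : ∀ a b : ZMod 2, a ≠ b ↔ a + b = 1) (x i) (y i) with ⟨h1, h2⟩
  by_cases h : x i ≠ y i
  · simp [h, h1 h]
  · push_neg at h
    have hb : y i + y i = 0 := (by decide : ∀ b : ZMod 2, b + b = 0) (y i)
    simp [h, hb]

private lemma spanlem (n k : ℕ) (hk1 : 1 ≤ k) (hk2 : k + 1 ≤ n)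
    (p : (Fin n → ZMod 2) → Fin n → ℝ)
    (hp : ∀ x i, p x i = (-1 : ℝ) ^ ((x i).val) / Real.sqrt n)
    (x : Fin n → ZMod 2) :
    Submodule.span ℝ
      {v : Fin n → ℝ | ∃ y : Fin n → ZMod 2,
        (y = x ∨ hammingDist x y = k) ∧ v = p y} = ⊤ := by
  set V := Submodule.span ℝ {v : Fin n → ℝ | ∃ y : Fin n → ZMod 2,
        (y = x ∨ hammingDist x y = k) ∧ v = p y} with hV
  have hn : 0 < n := by omega
  have hsqrt : Real.sqrt n ≠ 0 := by
    rw [Real.sqrt_ne_zero']; exact_mod_cast hn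
  have hpx0 : ∀ i, p x i ≠ 0 := by
    intro i; rw [hp]
    exact div_ne_zero (pow_ne_zero _ (by norm_num)) hsqrt
  have hxV : p x ∈ V := Submodule.subset_span ⟨x, Or.inl rfl, rfl⟩
  have hyV : ∀ S : Finset (Fin n), S.card = k →
      p (fun i => x i + if i ∈ S then 1 else 0) ∈ V := by
    intro S hS
    refine Submodule.subset_span ⟨_, Or.inr ?_, rfl⟩
    rw [hammingDist, ← hS]
    congr 1
    ext i
    by_cases h : i ∈ S <;> simp [h]
  have hpy : ∀ (S : Finset (Fin n)) (m : Fin n),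
      p (fun i => x i + if i ∈ S then 1 else 0) m
        = if m ∈ S then -(p x m) else p x m := by
    intro S m
    by_cases h : m ∈ S
    · rw [hp, hp]
      simp only [h, if_true]
      rw [signflip]
      ring
    · rw [hp, hp]; simp [h]
  have hindV : ∀ S : Finset (Fin n), S.card = k →
      (fun m => if m ∈ S then p x m else 0) ∈ V := by
    intro S hS
    have h := V.smul_mem ((1:ℝ)/2) (V.sub_mem hxV (hyV S hS))
    convert h using 1
    funext m
    simp only [Pi.smul_apply, Pi.sub_apply, hpy S m, smul_eq_mul]
    by_cases h : m ∈ S <;> simp [h] <;> ring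
  have hdiff : ∀ i j : Fin n, i ≠ j →
      ((fun m => if i = m then p x m else 0)
        - fun m => if j = m then p x m else 0 : Fin n → ℝ) ∈ V := by
    intro i j hij
    obtain ⟨S, hiS, hSsub, hScard⟩ := Finset.exists_subsuperset_card_eq
      (show {i} ⊆ Finset.univ.erase j by
        simp [Finset.singleton_subset_iff, hij])
      (by simpa using hk1)
      (by rw [Finset.card_erase_of_mem (Finset.mem_univ j), Finset.card_univ,
              Fintype.card_fin]; omega)
    have hiS' : i ∈ S := hiS (Finset.mem_singleton_self i)
    have hjS : j ∉ S := fun hj => (Finset.mem_erase.1 (hSsub hj)).1 rfl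
    set S' : Finset (Fin n) := insert j (S.erase i) with hS'
    have hjS'e : j ∉ S.erase i := fun hj => hjS (Finset.mem_of_mem_erase hj)
    have hS'card : S'.card = k := by
      rw [hS', Finset.card_insert_of_notMem hjS'e, Finset.card_erase_of_mem hiS']
      omega
    have h := V.smul_mem (-(1:ℝ)/2) (V.sub_mem (hyV S hScard) (hyV S' hS'card))
    convert h using 1
    funext m
    simp only [Pi.smul_apply, Pi.sub_apply, hpy, smul_eq_mul]
    have hmS' : (m ∈ S') ↔ (m = j ∨ (m ∈ S ∧ m ≠ i)) := by
      rw [hS']; simp [Finset.mem_insert, Finset.mem_erase, and_comm]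
    have hij' : j ≠ i := Ne.symm hij
    by_cases h1 : m = i
    · subst h1
      have hm1 : m ∉ S' := by
        rw [hmS']
        rintro (h | ⟨-, h⟩)
        · exact hij h
        · exact h rfl
      simp only [if_pos rfl, if_neg hij', if_pos hiS', if_neg hm1, if_true, eq_self_iff_true]
      ring
    · by_cases h2 : m = j
      · subst h2
        have hm2 : m ∈ S' := by rw [hmS']; exact Or.inl rfl
        have hi' : ¬ i = m := fun h => h1 h.symm
        simp only [if_neg hi', if_pos rfl, if_neg hjS, if_pos hm2, if_true, eq_self_iff_true]
        ring
      · have hi' : ¬ i = m := fun h => h1 h.symm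
        have hj' : ¬ j = m := fun h => h2 h.symm
        have hm3 : (m ∈ S') ↔ m ∈ S := by
          rw [hmS']
          constructor
          · rintro (h | ⟨h, -⟩)
            · exact absurd h h2
            · exact h
          · exact fun h => Or.inr ⟨h, h1⟩
        simp only [if_neg hi', if_neg hj', hm3]
        by_cases h3 : m ∈ S <;> simp [h3]
  have hq : ∀ i : Fin n, (fun m => if i = m then p x m else 0) ∈ V := by
    intro i
    obtain ⟨S, hiS, -, hScard⟩ := Finset.exists_subsuperset_card_eq
      (Finset.subset_univ {i})
      (by simpa using hk1)
      (by rw [Finset.card_univ, Fintype.card_fin]; omega)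
    have hiS' : i ∈ S := hiS (Finset.mem_singleton_self i)
    have hk0 : (k:ℝ) ≠ 0 := Nat.cast_ne_zero.2 (by omega)
    have key : (k:ℝ) • (fun m' => if i = m' then p x m' else 0)
        = (fun m' => if m' ∈ S then p x m' else 0)
          + ∑ m ∈ S, ((fun m' => if i = m' then p x m' else 0)
              - fun m' => if m = m' then p x m' else 0) := by
      funext m'
      simp only [Pi.smul_apply, Pi.add_apply, Finset.sum_apply, Pi.sub_apply, smul_eq_mul]
      rw [Finset.sum_sub_distrib, Finset.sum_const,
        Finset.sum_ite_eq' S m' (fun _ => p x m'), hScard]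
      simp only [nsmul_eq_mul]
      ring
    have hmem : (k:ℝ) • (fun m => if i = m then p x m else 0) ∈ V := by
      rw [key]
      refine V.add_mem (hindV S hScard) (Submodule.sum_mem _ fun m hm => ?_)
      by_cases h : i = m
      · subst h
        simp only [sub_self]
        exact V.zero_mem
      · exact hdiff i m h
    have h2' := V.smul_mem ((k:ℝ)⁻¹) hmem
    rwa [inv_smul_smul₀ hk0] at h2'
  rw [eq_top_iff]
  rintro v -
  rw [pi_eq_sum_univ v]
  refine Submodule.sum_mem _ fun i _ => Submodule.smul_mem _ _ ?_
  have he : (fun j => if i = j then (1:ℝ) else 0)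
      = (p x i)⁻¹ • fun m => if i = m then p x m else 0 := by
    funext j
    by_cases h : i = j
    · subst h
      simp [inv_mul_cancel₀ (hpx0 i)]
    · simp [h]
  rw [he]
  exact Submodule.smul_mem _ _ (hq i)

theorem stmt13 (n k : ℕ) (hk : Even k) (h1 : (n : ℝ) / 2 + 1 ≤ k) (h2 : k + 1 ≤ n)
    (p : (Fin n → ZMod 2) → Fin n → ℝ)
    (hp : ∀ x i, p x i = (-1 : ℝ) ^ ((x i).val) / Real.sqrt n) :
    (∀ x : Fin n → ZMod 2, Even (hammingDist x 0) →
      Submodule.span ℝ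
        {v : Fin n → ℝ | ∃ y : Fin n → ZMod 2,
          (y = x ∨ hammingDist x y = k) ∧ v = p y} = ⊤) ∧
    ∀ R : Matrix (Fin n) (Fin n) ℝ, R.IsSymm →
      (∀ x y : Fin n → ZMod 2, Even (hammingDist x 0) → Even (hammingDist y 0) →
        (x = y ∨ hammingDist x y = k) →
        dotProduct (p x) (R.mulVec (p y)) = 0) →
      R = 0 := by
  have hn1 : 1 ≤ n := by omega
  have hk1 : 1 ≤ k := by
    have h0 : (0:ℝ) ≤ (n:ℝ)/2 := by positivity
    have hx : (1:ℝ) ≤ (k:ℝ) := by linarith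
    exact_mod_cast hx
  have hspan := spanlem n k hk1 h2 p hp
  refine ⟨fun x _ => hspan x, ?_⟩
  intro R hsym hR
  have hparity : ∀ x y : Fin n → ZMod 2, Even (hammingDist x 0) →
      hammingDist x y = k → Even (hammingDist y 0) := by
    intro x y hx hxy
    have hy0 : (hammingDist y 0 : ZMod 2)
        = (hammingDist x 0 : ZMod 2) + (hammingDist x y : ZMod 2) := by
      rw [parity n x y, parity n x 0, parity n y 0, ← Finset.sum_add_distrib]
      refine Finset.sum_congr rfl fun i _ => ?_
      have hxx : x i + x i = 0 := (by decide : ∀ a : ZMod 2, a + a = 0) (x i)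
      show y i + (0:ZMod 2) = (x i + 0) + (x i + y i)
      rw [add_zero, add_zero, ← add_assoc, hxx, zero_add]
    have hx2 : ((hammingDist x 0 : ℕ) : ZMod 2) = 0 :=
      (ZMod.natCast_eq_zero_iff _ 2).2 (even_iff_two_dvd.1 hx)
    have hk2' : ((k : ℕ) : ZMod 2) = 0 :=
      (ZMod.natCast_eq_zero_iff _ 2).2 (even_iff_two_dvd.1 hk)
    rw [even_iff_two_dvd, ← ZMod.natCast_eq_zero_iff]
    rw [hy0, hx2, hxy, hk2', add_zero]
  have hs : ∀ a b, R a b = R b a := fun a b => by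
    have h := congrFun (congrFun hsym b) a
    simpa [Matrix.transpose_apply] using h
  have stepA : ∀ x : Fin n → ZMod 2, Even (hammingDist x 0) → R.mulVec (p x) = 0 := by
    intro x hx
    let L : (Fin n → ℝ) →ₗ[ℝ] ℝ :=
      { toFun := fun v => dotProduct (p x) (R.mulVec v)
        map_add' := fun u v => by simp [Matrix.mulVec_add, dotProduct_add]
        map_smul' := fun c v => by simp [Matrix.mulVec_smul, dotProduct_smul] }
    have hker : Submodule.span ℝ
        {v : Fin n → ℝ | ∃ y : Fin n → ZMod 2,
          (y = x ∨ hammingDist x y = k) ∧ v = p y} ≤ LinearMap.ker L := by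
      rw [Submodule.span_le]
      rintro v ⟨y, hy, rfl⟩
      have hyeven : Even (hammingDist y 0) := by
        rcases hy with rfl | hy
        · exact hx
        · exact hparity x y hx hy
      have h0 := hR x y hx hyeven (by rcases hy with rfl | hy; exacts [Or.inl rfl, Or.inr hy])
      exact LinearMap.mem_ker.2 h0
    rw [hspan x] at hker
    have hL : ∀ v, L v = 0 := fun v => LinearMap.mem_ker.1 (hker Submodule.mem_top)
    funext j
    have h0 := hL (Pi.single j 1)
    simp only [L, LinearMap.coe_mk, AddHom.coe_mk, Matrix.mulVec_single,
      dotProduct] at h0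
    show (R.mulVec (p x)) j = (0 : Fin n → ℝ) j
    simp only [Matrix.mulVec, dotProduct, Pi.zero_apply]
    rw [← h0]
    refine Finset.sum_congr rfl fun m _ => ?_
    rw [hs j m]
    simp [mul_comm]
  have hRv : ∀ v, R.mulVec v = 0 := by
    have hker : Submodule.span ℝ
        {v : Fin n → ℝ | ∃ y : Fin n → ZMod 2,
          (y = (0 : Fin n → ZMod 2) ∨ hammingDist (0 : Fin n → ZMod 2) y = k) ∧ v = p y}
          ≤ LinearMap.ker (Matrix.mulVecLin R) := by
      rw [Submodule.span_le]
      rintro v ⟨y, hy, rfl⟩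
      have hyeven : Even (hammingDist y 0) := by
        rcases hy with rfl | hy
        · simp
        · exact hparity 0 y (by simp) hy
      exact LinearMap.mem_ker.2 (stepA y hyeven)
    rw [hspan 0] at hker
    exact fun v => LinearMap.mem_ker.1 (hker Submodule.mem_top)
  ext i j
  have h0 := congrFun (hRv (Pi.single j 1)) i
  simpa [Matrix.mulVec_single] using h0
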